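/- Let R, C_v, τ1, τ2, κ, μ > 0 and define on (0,∞)×(0,∞)×ℝ×ℝ the ideal polytropic constitutive functions p(v,θ,q,S) = Rθ/v − τ1 q²/(2κθ) − τ2 S²/(2μ) and e(v,θ,q,S) = C_v θ + τ1 v q²/(κθ) + τ2 v S²/(2μ). Then for all v > 0, θ > 0, q ∈ ℝ, S ∈ ℝ the Gibbs compatibility relation ∂_v e(v,θ,q,S) = θ ∂_θ p(v,θ,q,S) − p(v,θ,q,S) holds. -/

import Mathlib

/-- Gibbs compatibility relation ∂_v e = θ ∂_θ p − p for the ideal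
polytropic constitutive functions of the hyperbolic Navier–Stokes model. -/
theorem gibbs_compatibility_ideal_polytropic
    (R Cv τ1 τ2 κ μ : ℝ)
    (hR : 0 < R) (hCv : 0 < Cv) (hτ1 : 0 < τ1) (hτ2 : 0 < τ2) (hκ : 0 < κ) (hμ : 0 < μ)
    (v θ q S : ℝ) (hv : 0 < v) (hθ : 0 < θ) :
    deriv (fun v' => Cv * θ + τ1 * v' * q ^ 2 / (κ * θ) + τ2 * v' * S ^ 2 / (2 * μ)) v
      = θ * deriv (fun θ' => R * θ' / v - τ1 * q ^ 2 / (2 * κ * θ') - τ2 * S ^ 2 / (2 * μ)) θ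
        - (R * θ / v - τ1 * q ^ 2 / (2 * κ * θ) - τ2 * S ^ 2 / (2 * μ)) := by
  have hθ0 : θ ≠ 0 := ne_of_gt hθ
  have hv0 : v ≠ 0 := ne_of_gt hv
  have hκ0 : κ ≠ 0 := ne_of_gt hκ
  have hμ0 : μ ≠ 0 := ne_of_gt hμ
  have h1 : HasDerivAt (fun v' => Cv * θ + τ1 * v' * q ^ 2 / (κ * θ) + τ2 * v' * S ^ 2 / (2 * μ))
      (τ1 * q ^ 2 / (κ * θ) + τ2 * S ^ 2 / (2 * μ)) v := by
    have h := (((hasDerivAt_id v).const_mul τ1).mul_const (q ^ 2)).div_const (κ * θ)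
    have h' := (((hasDerivAt_id v).const_mul τ2).mul_const (S ^ 2)).div_const (2 * μ)
    have := ((h.const_add (Cv * θ)).add h')
    simpa [Pi.add_def, mul_comm, mul_assoc, mul_left_comm] using this
  have h2 : HasDerivAt (fun θ' => R * θ' / v - τ1 * q ^ 2 / (2 * κ * θ') - τ2 * S ^ 2 / (2 * μ))
      (R / v + τ1 * q ^ 2 / (2 * κ * θ ^ 2)) θ := by
    have ha : HasDerivAt (fun θ' : ℝ => R * θ' / v) (R / v) θ := by
      simpa [mul_comm, mul_assoc, mul_left_comm] using
        (((hasDerivAt_id θ).const_mul R).div_const v)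
    have hb : HasDerivAt (fun θ' : ℝ => τ1 * q ^ 2 / (2 * κ * θ')) 
        (-(τ1 * q ^ 2) / (2 * κ * θ ^ 2) * (2*κ) / (2*κ)) θ := by
      have hne : 2 * κ * θ ≠ 0 := by positivity
      have h0 : HasDerivAt (fun θ' : ℝ => τ1 * q ^ 2 / (2 * κ * θ'))
          ((0 * (2 * κ * θ) - τ1 * q ^ 2 * (2 * κ * 1)) / (2 * κ * θ) ^ 2) θ :=
        (hasDerivAt_const θ (τ1 * q ^ 2)).div (((hasDerivAt_id θ).const_mul (2*κ))) hne
      convert h0 using 1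
      field_simp
      ring_nf
    have hc := (ha.sub hb).sub_const (τ2 * S ^ 2 / (2 * μ))
    refine hc.congr_deriv ?_
    have : (2:ℝ)*κ ≠ 0 := by positivity
    field_simp
    ring
  rw [h1.deriv, h2.deriv]
  field_simp
  ring
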